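/- Let G be a finite graph with a sequence of avoiding bags B_1,...,B_m with core vertex set B_0 (the vertices outside all closed neighborhoods of the bags), chosen of lexicographically maximal rank (|B_1|,...,|B_m|) among all sequences of avoiding bags, in a minimal counterexample setting for T3(1,0). Then for any vertex x in B_0, every connected component of the core C minus N_C[x] is a complete graph. -/
import Mathlib


open SimpleGraph

/-- Closed neighborhood of a vertex set. -/
def closedNbhd {V : Type*} (G : SimpleGraph V) (S : Set V) : Set V :=
  S ∪ {v | ∃ u ∈ S, G.Adj u v}

/-- Open neighborhood of a vertex set. -/
def openNbhd {V : Type*} (G : SimpleGraph V) (S : Set V) : Set V :=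
  {v | v ∉ S ∧ ∃ u ∈ S, G.Adj u v}

/-- A walk that is an induced path. -/
def IsInducedPathW {V : Type*} (G : SimpleGraph V) {a b : V} (p : G.Walk a b) : Prop :=
  p.IsPath ∧ ∀ u ∈ p.support, ∀ v ∈ p.support, G.Adj u v → s(u, v) ∈ p.edges

/-- The extension with pendant vertices `s'`, `t'` attached to a copy with vertex set `S`
is closable: there is an induced `s',t'`-path meeting `N[S ∪ {s',t'}]` only in `s'` and `t'`. -/
def Closable {V : Type*} (G : SimpleGraph V) (S : Set V) (s' t' : V) : Prop :=
  ∃ p : G.Walk s' t', IsInducedPathW G p ∧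
    ∀ v ∈ p.support, v ∈ closedNbhd G (S ∪ {s', t'}) → v = s' ∨ v = t'

/-- `f` realizes an induced copy of `H` in `G`. -/
def IsCopy {V α : Type*} (G : SimpleGraph V) (H : SimpleGraph α) (f : α → V) : Prop :=
  Function.Injective f ∧ ∀ x y : α, H.Adj x y ↔ G.Adj (f x) (f y)

/-- `(s', t')` is an extension of the copy `f` of the two-rooted graph `(H, s, t)` in `G`:
two pendant edges at the images of the roots. -/
def IsExtension {V α : Type*} (G : SimpleGraph V) (H : SimpleGraph α) (f : α → V)
    (s t : α) (s' t' : V) : Prop :=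
  s' ≠ t' ∧ (∀ x, f x ≠ s') ∧ (∀ x, f x ≠ t') ∧ ¬ G.Adj s' t' ∧
  G.Adj (f s) s' ∧ G.Adj (f t) t' ∧
  (∀ x, f x ≠ f s → ¬ G.Adj (f x) s') ∧ (∀ x, f x ≠ f t → ¬ G.Adj (f x) t')

/-- An avoidable copy of the two-rooted graph `(H, s, t)` in `G`. -/
def AvoidableCopy {V α : Type*} (G : SimpleGraph V) (H : SimpleGraph α) (f : α → V)
    (s t : α) : Prop :=
  IsCopy G H f ∧ ∀ s' t' : V, IsExtension G H f s t s' t' →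
    Closable G (Set.range f) s' t'

/-- The two-rooted graph `(H, s, t)` is inherent. -/
def Inherent {α : Type} [Fintype α] (H : SimpleGraph α) (s t : α) : Prop :=
  ∀ (V : Type) (_ : Fintype V) (G : SimpleGraph V),
    (∃ f : α → V, IsCopy G H f) → ∃ f : α → V, AvoidableCopy G H f s t

/-- `G` confines the two-rooted graph `(H, s, t)`. -/
def Confines {V α : Type*} (G : SimpleGraph V) (H : SimpleGraph α) (s t : α) : Prop :=
  (∃ f : α → V, IsCopy G H f) ∧ ∀ f : α → V, ¬ AvoidableCopy G H f s t

/-- `G` contains an induced path on three vertices. -/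
def HasInducedP3 {V : Type*} (G : SimpleGraph V) : Prop :=
  ∃ x y z : V, G.Adj x y ∧ G.Adj y z ∧ x ≠ z ∧ ¬ G.Adj x z

/-- The core vertex set of a sequence of bags: vertices outside all closed neighborhoods. -/
def coreSet {V : Type} (G : SimpleGraph V) (B : List (Finset V)) : Set V :=
  {v | ∀ Bi ∈ B, v ∉ closedNbhd G (↑Bi : Set V)}

/-- A sequence of avoiding bags in `G`. -/
def IsAvoidingBags {V : Type} [Fintype V] (G : SimpleGraph V) (B : List (Finset V)) : Prop :=
  (∀ Bi ∈ B, Bi.Nonempty ∧ (G.induce (↑Bi : Set V)).Connected) ∧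
  List.Pairwise (fun Bi Bj =>
    (↑Bi : Set V) ∩ closedNbhd G (↑Bj : Set V) = ∅ ∧
    (↑Bj : Set V) ∩ closedNbhd G (↑Bi : Set V) = ∅) B ∧
  HasInducedP3 (G.induce (coreSet G B))

lemma p3_of_walk {V : Type*} {G : SimpleGraph V} {u v : V} (p : G.Walk u v) :
    u ≠ v → ¬ G.Adj u v → HasInducedP3 G := by
  induction p with
  | nil => intro h _; exact absurd rfl h
  | @cons a b c h q ih =>
    intro hne hadj
    by_cases hbc : G.Adj b c
    · exact ⟨a, b, c, h, hbc, hne, hadj⟩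
    · by_cases hbc' : b = c
      · subst hbc'; exact absurd h hadj
      · exact ih hbc' hbc

lemma lex_prefix (l : List ℕ) (a : ℕ) : List.Lex (· < ·) l (l ++ [a]) := by
  induction l with
  | nil => exact List.Lex.nil
  | cons b t ih => exact List.Lex.cons ih

lemma bind_pure_coe {V : Type} (l : List (Finset V)) :
    (l >>= fun a => (pure (↑a : Set V) : List (Set V))) = l.map ((↑·) : Finset V → Set V) := by
  induction l with
  | nil => rfl
  | cons a t ih =>
    show (a :: t).flatMap _ = _
    rw [List.flatMap_cons, List.map_cons, ← ih]
    rfl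

lemma singleton_connected {V : Type*} (G : SimpleGraph V) (x : V) :
    (G.induce (↑({x} : Finset V) : Set V)).Connected := by
  rw [SimpleGraph.connected_iff]
  refine ⟨fun a b => ?_, ⟨⟨x, by simp⟩⟩⟩
  have ha : a.1 = x := by simpa using a.2
  have hb : b.1 = x := by simpa using b.2
  have : a = b := Subtype.ext (ha.trans hb.symm)
  exact this ▸ SimpleGraph.Reachable.refl a

/-- in a minimal counterexample `G` for `T₃(1,0)`, if `B` is a
lexicographically-rank-maximal sequence of avoiding bags with core `C`, then for every
vertex `x` of the core, every connected component of `C − N_C[x]` is complete. -/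
theorem stmt_6 {V : Type} [Fintype V] (G : SimpleGraph V)
    (hP3 : HasInducedP3 G)
    (hnoavoid : ∀ f : Fin 3 → V, ¬ AvoidableCopy G (SimpleGraph.pathGraph 3) f 0 1)
    (hmin : ∀ (W : Type) (_ : Fintype W) (G' : SimpleGraph W),
      Fintype.card W < Fintype.card V → HasInducedP3 G' →
      ∃ f : Fin 3 → W, AvoidableCopy G' (SimpleGraph.pathGraph 3) f 0 1)
    (B : List (Finset V)) (hB : IsAvoidingBags G B) (hBne : B ≠ [])
    (hmax : ∀ B' : List (Finset V), IsAvoidingBags G B' →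
      ¬ List.Lex (· < ·) (B.map Finset.card) (B'.map Finset.card))
    (x : V) (hx : x ∈ coreSet G B) :
    ∀ (u v : V) (hu : u ∈ coreSet G B ∧ u ≠ x ∧ ¬ G.Adj x u)
      (hv : v ∈ coreSet G B ∧ v ≠ x ∧ ¬ G.Adj x v),
      (G.induce {w | w ∈ coreSet G B ∧ w ≠ x ∧ ¬ G.Adj x w}).Reachable ⟨u, hu⟩ ⟨v, hv⟩ →
      u ≠ v → G.Adj u v := by
  intro u v hu hv hreach hne
  by_contra hadj
  set S : Set V := {w | w ∈ coreSet G B ∧ w ≠ x ∧ ¬ G.Adj x w} with hS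
  have hP3S : HasInducedP3 (G.induce S) := by
    obtain ⟨p⟩ := hreach
    refine p3_of_walk p ?_ hadj
    intro h; exact hne (congrArg Subtype.val h)
  set B' : List (Finset V) := B ++ [{x}] with hB'
  have hmemx : ∀ w, w ∈ closedNbhd G (↑({x} : Finset V) : Set V) ↔ (w = x ∨ G.Adj x w) := by
    intro w
    simp only [closedNbhd, Finset.coe_singleton, Set.mem_union, Set.mem_singleton_iff,
      Set.mem_setOf_eq]
    constructor
    · rintro (rfl | ⟨u', rfl, h⟩)
      · exact Or.inl rfl
      · exact Or.inr h
    · rintro (rfl | h)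
      · exact Or.inl rfl
      · exact Or.inr ⟨x, rfl, h⟩
  have hcore : coreSet G B' = S := by
    ext w
    simp only [coreSet, Set.mem_setOf_eq, hS]
    constructor
    · intro h
      have h1 : ∀ Bi ∈ B, w ∉ closedNbhd G (↑Bi : Set V) :=
        fun Bi hBi => h Bi (List.mem_append.mpr (Or.inl hBi))
      have h2 := h {x} (List.mem_append.mpr (Or.inr (List.mem_singleton_self _)))
      rw [hmemx] at h2
      push_neg at h2
      exact ⟨h1, h2.1, h2.2⟩
    · rintro ⟨h1, h2, h3⟩ Bi hBi
      rcases List.mem_append.mp hBi with h | h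
      · exact h1 Bi h
      · rw [List.mem_singleton] at h
        subst h
        rw [hmemx]
        rintro (rfl | ha)
        · exact h2 rfl
        · exact h3 ha
  have hxB : ∀ Bi ∈ B, x ∉ closedNbhd G (↑Bi : Set V) := hx
  have hB'avoid : IsAvoidingBags G B' := by
    obtain ⟨hconn, hpw, _⟩ := hB
    refine ⟨?_, ?_, ?_⟩
    · intro Bi hBi
      rcases List.mem_append.mp hBi with h | h
      · exact hconn Bi h
      · rw [List.mem_singleton] at h
        subst h
        exact ⟨Finset.singleton_nonempty x, singleton_connected G x⟩
    · rw [bind_pure_coe, List.pairwise_map] at hpw ⊢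
      rw [hB', List.pairwise_append]
      refine ⟨hpw, List.pairwise_singleton _ _, ?_⟩
      intro Bi hBi b hb
      rw [List.mem_singleton] at hb
      subst hb
      have hxni : x ∉ closedNbhd G (↑Bi : Set V) := hxB Bi hBi
      constructor
      · ext w
        simp only [Set.mem_inter_iff, Set.mem_empty_iff_false, iff_false, not_and,
          Finset.mem_coe]
        intro hw hwc
        rw [hmemx] at hwc
        rcases hwc with rfl | hadj'
        · exact hxni (Or.inl hw)
        · exact hxni (Or.inr ⟨w, hw, hadj'.symm⟩)
      · ext w
        simp only [Set.mem_inter_iff, Finset.coe_singleton, Set.mem_singleton_iff,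
          Set.mem_empty_iff_false, iff_false, not_and]
        rintro rfl hw
        exact hxni hw
    · rw [hcore]
      exact hP3S
  refine hmax B' hB'avoid ?_
  rw [hB', List.map_append]
  exact lex_prefix (B.map Finset.card) _
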